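/- Let H be an n×m matrix, K ⊆ {1,...,n} with |K| ≤ k, and C > 1 be such that every w in the range of H satisfies C‖w_K‖₁ ≤ ‖w_{K̄}‖₁. Let e be supported on K, w ∈ R^n, v, z ∈ R^n, and u ∈ R^m. If ‖Hu + w + e + v − z‖₁ ≤ ‖w + e‖₁, then ‖Hu‖₁ ≤ (2(C+1)/(C−1))·(‖w‖₁ + ‖v‖₁ + ‖z‖₁). -/
import Mathlib

open Finset
noncomputable section
open scoped Classical

def l1 {n : ℕ} (w : Fin n → ℝ) : ℝ := ∑ i, |w i|
def l2 {n : ℕ} (w : Fin n → ℝ) : ℝ := Real.sqrt (∑ i, (w i)^2)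
def restr {n : ℕ} (w : Fin n → ℝ) (K : Finset (Fin n)) : Fin n → ℝ := fun i => if i ∈ K then w i else 0
def l0 {n : ℕ} (w : Fin n → ℝ) : ℕ := (Finset.univ.filter (fun i => w i ≠ 0)).card

lemma l1_nonneg {n : ℕ} (a : Fin n → ℝ) : 0 ≤ l1 a :=
  Finset.sum_nonneg fun i _ => abs_nonneg _

lemma l1_add_le {n : ℕ} (a b : Fin n → ℝ) : l1 (a + b) ≤ l1 a + l1 b := by
  unfold l1
  rw [← Finset.sum_add_distrib]
  exact Finset.sum_le_sum fun i _ => abs_add_le _ _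

lemma l1_neg {n : ℕ} (a : Fin n → ℝ) : l1 (-a) = l1 a := by
  unfold l1; simp

lemma l1_le_add {n : ℕ} (a b : Fin n → ℝ) : l1 a ≤ l1 (a + b) + l1 b := by
  have := l1_add_le (a + b) (-b)
  simpa [l1_neg] using this

lemma l1_split {n : ℕ} (a : Fin n → ℝ) (K : Finset (Fin n)) :
    l1 (restr a K) + l1 (restr a Kᶜ) = l1 a := by
  unfold l1 restr
  rw [← Finset.sum_add_distrib]
  apply Finset.sum_congr rfl
  intro i _
  by_cases h : i ∈ K <;> simp [h]

lemma l1_restr_le {n : ℕ} (a : Fin n → ℝ) (K : Finset (Fin n)) :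
    l1 (restr a K) ≤ l1 a := by
  have := l1_split a K
  have := l1_nonneg (restr a Kᶜ)
  linarith

lemma restr_add {n : ℕ} (a b : Fin n → ℝ) (K : Finset (Fin n)) :
    restr (a + b) K = restr a K + restr b K := by
  funext i; unfold restr; by_cases h : i ∈ K <;> simp [h]

lemma restr_sub {n : ℕ} (a b : Fin n → ℝ) (K : Finset (Fin n)) :
    restr (a - b) K = restr a K - restr b K := by
  funext i; unfold restr; by_cases h : i ∈ K <;> simp [h]

theorem stmt9 {n m : ℕ} (H : Matrix (Fin n) (Fin m) ℝ)
    (K : Finset (Fin n)) (k : ℕ) (C : ℝ)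
    (hKk : K.card ≤ k) (hC : 1 < C)
    (hbal : ∀ u : Fin m → ℝ,
      C * l1 (restr (H.mulVec u) K) ≤ l1 (restr (H.mulVec u) Kᶜ))
    (e w v z : Fin n → ℝ) (u : Fin m → ℝ)
    (heK : ∀ i, i ∉ K → e i = 0)
    (hineq : l1 (H.mulVec u + w + e + v - z) ≤ l1 (w + e)) :
    l1 (H.mulVec u) ≤ 2 * (C + 1) / (C - 1) * (l1 w + l1 v + l1 z) := by
  set h := H.mulVec u with hh
  set a := h + w + e + v - z with ha
  have heK' : restr e K = e := by
    funext i; unfold restr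
    by_cases hi : i ∈ K
    · simp [hi]
    · simp [hi, heK i hi]
  have heKc : restr e Kᶜ = 0 := by
    funext i; unfold restr
    by_cases hi : i ∈ K
    · simp [hi]
    · simp [hi, heK i hi]
  -- split a on K
  have haK : restr a K = (restr w K + e) + (restr h K + restr v K - restr z K) := by
    rw [ha, restr_sub, restr_add, restr_add, restr_add, heK']
    funext i; simp; ring
  have haKc : restr a Kᶜ = restr h Kᶜ + (restr w Kᶜ + restr v Kᶜ - restr z Kᶜ) := by
    rw [ha, restr_sub, restr_add, restr_add, restr_add, heKc]
    funext i; simp; ring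
  -- triangle bounds
  have h1 : l1 (restr w K + e) ≤ l1 (restr a K) + (l1 (restr h K) + l1 (restr v K) + l1 (restr z K)) := by
    have t1 := l1_le_add (restr w K + e) (restr h K + restr v K - restr z K)
    rw [← haK] at t1
    have t2 : l1 (restr h K + restr v K - restr z K) ≤ l1 (restr h K) + l1 (restr v K) + l1 (restr z K) := by
      have u1 : restr h K + restr v K - restr z K = (restr h K + restr v K) + (-(restr z K)) := by
        funext i; simp; ring
      rw [u1]
      have q1 := l1_add_le (restr h K + restr v K) (-(restr z K))
      have q2 := l1_add_le (restr h K) (restr v K)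
      rw [l1_neg] at q1
      linarith
    linarith
  have h2 : l1 (restr h Kᶜ) ≤ l1 (restr a Kᶜ) + (l1 (restr w Kᶜ) + l1 (restr v Kᶜ) + l1 (restr z Kᶜ)) := by
    have t1 := l1_le_add (restr h Kᶜ) (restr w Kᶜ + restr v Kᶜ - restr z Kᶜ)
    rw [← haKc] at t1
    have t2 : l1 (restr w Kᶜ + restr v Kᶜ - restr z Kᶜ) ≤ l1 (restr w Kᶜ) + l1 (restr v Kᶜ) + l1 (restr z Kᶜ) := by
      have u1 : restr w Kᶜ + restr v Kᶜ - restr z Kᶜ = (restr w Kᶜ + restr v Kᶜ) + (-(restr z Kᶜ)) := by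
        funext i; simp; ring
      rw [u1]
      have q1 := l1_add_le (restr w Kᶜ + restr v Kᶜ) (-(restr z Kᶜ))
      have q2 := l1_add_le (restr w Kᶜ) (restr v Kᶜ)
      rw [l1_neg] at q1
      linarith
    linarith
  -- RHS of hineq
  have hwe : l1 (w + e) = l1 (restr w K + e) + l1 (restr w Kᶜ) := by
    rw [← l1_split (w + e) K, restr_add, heK', restr_add, heKc]
    simp
  have hasplit := l1_split a K
  have hvsplit := l1_split v K
  have hzsplit := l1_split z K
  have hwle := l1_restr_le w Kᶜ
  have hkey : l1 (restr h Kᶜ) - l1 (restr h K) ≤ 2 * (l1 w + l1 v + l1 z) := by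
    have n1 := l1_nonneg v
    have n2 := l1_nonneg z
    have n3 := l1_nonneg (restr v K)
    have n4 := l1_nonneg (restr z K)
    have n5 := l1_nonneg (restr v Kᶜ)
    have n6 := l1_nonneg (restr z Kᶜ)
    linarith
  have hb := hbal u
  rw [← hh] at hb
  have hsplit := l1_split h K
  have hC1 : 0 < C - 1 := by linarith
  have hKnn := l1_nonneg (restr h K)
  have hSnn : 0 ≤ l1 w + l1 v + l1 z := by
    have := l1_nonneg w; have := l1_nonneg v; have := l1_nonneg z; linarith
  -- (C-1) * l1 h ≤ (C+1) * (l1 hKc - l1 hK) ≤ (C+1) * 2S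
  have e1 : (C + 1) * (l1 (restr h Kᶜ) - l1 (restr h K)) - (C - 1) * (l1 (restr h K) + l1 (restr h Kᶜ))
      = 2 * (l1 (restr h Kᶜ) - C * l1 (restr h K)) := by ring
  have step1 : (C - 1) * l1 h ≤ (C + 1) * (l1 (restr h Kᶜ) - l1 (restr h K)) := by
    rw [← hsplit]; linarith
  have step2 : (C + 1) * (l1 (restr h Kᶜ) - l1 (restr h K)) ≤ (C + 1) * (2 * (l1 w + l1 v + l1 z)) :=
    mul_le_mul_of_nonneg_left hkey (by linarith)
  have hmain : (C - 1) * l1 h ≤ (C + 1) * (2 * (l1 w + l1 v + l1 z)) := le_trans step1 step2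
  rw [div_mul_eq_mul_div, le_div_iff₀ hC1]
  have hcomm : l1 h * (C - 1) = (C - 1) * l1 h := mul_comm _ _
  rw [hcomm]
  linarith
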